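/- Let λ : Ω → (0,∞) and w : Ω → (0,∞), with E(x,y) ⊆ Ω for all (x,y) ∈ Ω, and let M > 0 satisfy: |λ(x,y) − λ(x',y')| ≤ M·‖(x,y) − (x',y')‖_∞ for all (x,y),(x',y') ∈ Ω, λ(x,y) ≤ M for all (x,y) ∈ Ω, and w(x,y) ≤ M for all (x,y) ∈ Ω. Then for every N ≥ 1 and all D = ((x₁,y₁),…,(x_N,y_N)) and D' = ((x'₁,y'₁),…,(x'_N,y'_N)) in Ω^N, ‖ρ(D) − ρ(D')‖_{L²(w dA)} ≤ √(max{2M²(M+2), 4M}) · W_{1/2}(D,D'), where W_{1/2}(D,D') is the infimum over all permutations σ of {1,…,N} of Σ_{n=1}^N ‖(x_n,y_n) − (x'_{σ(n)},y'_{σ(n)})‖_∞^{1/2}. -/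

import Mathlib

open MeasureTheory Real
open scoped ENNReal NNReal

noncomputable section

/-- The open first quadrant. -/
def Omega : Set (ℝ × ℝ) := {p | 0 < p.1 ∧ 0 < p.2}

/-- The closed axis-aligned square centered at `p` with side length `l`. -/
def sqr (l : ℝ) (p : ℝ × ℝ) : Set (ℝ × ℝ) :=
  Set.Icc (p.1 - l / 2) (p.1 + l / 2) ×ˢ Set.Icc (p.2 - l / 2) (p.2 + l / 2)

/-- The square `E(p)` associated to a length function `lam`. -/
def sqE (lam : ℝ × ℝ → ℝ) (p : ℝ × ℝ) : Set (ℝ × ℝ) := sqr (lam p) p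

/-- The persistence surface of the diagram `D`. -/
def surf (f lam : ℝ × ℝ → ℝ) {N : ℕ} (D : Fin N → ℝ × ℝ) (z : ℝ × ℝ) : ℝ :=
  ∑ n, f (D n) * Set.indicator (sqE lam (D n)) 1 z

/-- The identification `ρ(D)` of a persistence diagram as a function. -/
def rho (lam : ℝ × ℝ → ℝ) {N : ℕ} (D : Fin N → ℝ × ℝ) (z : ℝ × ℝ) : ℝ :=
  ∑ n, Set.indicator (sqE lam (D n)) 1 z

/-- The `L²(w dA)` norm, the integral taken over `Omega`. -/
def l2norm (w g : ℝ × ℝ → ℝ) : ℝ :=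
  Real.sqrt (∫ z in Omega, (g z) ^ 2 * w z)

/-- The `p`-Wasserstein distance between two `N`-point diagrams (sup-norm ground metric). -/
def Wp (p : ℝ) {N : ℕ} (D D' : Fin N → ℝ × ℝ) : ℝ :=
  ⨅ σ : Equiv.Perm (Fin N), (∑ n, ‖D n - D' (σ n)‖ ^ p) ^ (1 / p)

/-- The `1/2`-Wasserstein distance (no outer power). -/
def Whalf {N : ℕ} (D D' : Fin N → ℝ × ℝ) : ℝ :=
  ⨅ σ : Equiv.Perm (Fin N), ∑ n, ‖D n - D' (σ n)‖ ^ ((1 : ℝ) / 2)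

/-- The `1`-Wasserstein distance. -/
def W1 {N : ℕ} (D D' : Fin N → ℝ × ℝ) : ℝ :=
  ⨅ σ : Equiv.Perm (Fin N), ∑ n, ‖D n - D' (σ n)‖

/-- The persistence image value `I_S(D) = ∫_S f̃ρ(D) w dA`. -/
def Ipix (f lam w : ℝ × ℝ → ℝ) {N : ℕ} (D : Fin N → ℝ × ℝ) (S : Set (ℝ × ℝ)) : ℝ :=
  ∫ z in S, surf f lam D z * w z

/-- `‖f‖_∞ = sup_Ω |f|`. -/
def supAbs (f : ℝ × ℝ → ℝ) : ℝ := ⨆ p : Omega, |f p.val|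

/-- `‖λ‖_∞ = sup_Ω λ`. -/
def supLam (lam : ℝ × ℝ → ℝ) : ℝ := ⨆ p : Omega, lam p.val

lemma vol_sqr (l : ℝ) (hl : 0 ≤ l) (p : ℝ × ℝ) :
    volume (sqr l p) = ENNReal.ofReal (l * l) := by
  rw [sqr, Measure.volume_eq_prod, Measure.prod_prod]
  simp only [Real.volume_Icc]
  rw [← ENNReal.ofReal_mul (by linarith)]
  congr 2 <;> ring

lemma arith_bound (l l' δ M : ℝ) (hl : 0 < l) (hl' : 0 < l')
    (hlM : l ≤ M) (hl'M : l' ≤ M) (hM : 0 < M) (hδ0 : 0 ≤ δ)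
    (hll1 : -(M * δ) ≤ l - l') (hll2 : l - l' ≤ M * δ) :
    l * l - max (min l l' - δ) 0 * max (min l l' - δ) 0 +
      (l' * l' - max (min l l' - δ) 0 * max (min l l' - δ) 0)
      ≤ 2 * M * (M + 2) * δ := by
  rcases le_total (min l l') δ with h | h
  · have hcz : max (min l l' - δ) 0 = 0 := max_eq_right (by linarith)
    rw [hcz]
    rcases min_cases l l' with ⟨h3, h4⟩ | ⟨h3, h4⟩ <;> rw [h3] at h
    · have a1 : l * l ≤ M * δ := mul_le_mul hlM h hl.le hM.le
      have a2 : l' * l' ≤ M * (δ + M * δ) :=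
        le_trans (mul_le_mul_of_nonneg_right hl'M hl'.le)
          (mul_le_mul_of_nonneg_left (by linarith) hM.le)
      nlinarith [a1, a2, mul_nonneg (mul_nonneg hM.le hM.le) hδ0,
        mul_nonneg hM.le hδ0]
    · have a1 : l' * l' ≤ M * δ := mul_le_mul hl'M h hl'.le hM.le
      have a2 : l * l ≤ M * (δ + M * δ) :=
        le_trans (mul_le_mul_of_nonneg_right hlM hl.le)
          (mul_le_mul_of_nonneg_left (by linarith) hM.le)
      nlinarith [a1, a2, mul_nonneg (mul_nonneg hM.le hM.le) hδ0,
        mul_nonneg hM.le hδ0]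
  · have hcz : max (min l l' - δ) 0 = min l l' - δ := max_eq_left (by linarith)
    rw [hcz]
    rcases min_cases l l' with ⟨h3, h4⟩ | ⟨h3, h4⟩ <;> rw [h3] <;> rw [h3] at h
    · have p1 : (l' - l) * (l' + l) ≤ (M * δ) * (2 * M) :=
        mul_le_mul (by linarith) (by linarith) (by linarith) (by positivity)
      have p2 : l * δ ≤ M * δ := mul_le_mul_of_nonneg_right hlM hδ0
      nlinarith [p1, p2, mul_nonneg hδ0 hδ0]
    · have p1 : (l - l') * (l + l') ≤ (M * δ) * (2 * M) :=
        mul_le_mul (by linarith) (by linarith) (by linarith) (by positivity)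
      have p2 : l' * δ ≤ M * δ := mul_le_mul_of_nonneg_right hl'M hδ0
      nlinarith [p1, p2, mul_nonneg hδ0 hδ0]

lemma vol_symmdiff_xy (x y l x' y' l' δ M : ℝ) (hl : 0 < l) (hl' : 0 < l')
    (hlM : l ≤ M) (hl'M : l' ≤ M) (hM : 0 < M)
    (hδx : |x - x'| ≤ δ) (hδy : |y - y'| ≤ δ) (hll' : |l - l'| ≤ M * δ) :
    volume (sqr l (x, y) \ sqr l' (x', y')) + volume (sqr l' (x', y') \ sqr l (x, y))
      ≤ ENNReal.ofReal (2 * M * (M + 2) * δ) := by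
  have hδ0 : 0 ≤ δ := le_trans (abs_nonneg _) hδx
  obtain ⟨hx1, hx2⟩ := abs_le.mp hδx
  obtain ⟨hy1, hy2⟩ := abs_le.mp hδy
  obtain ⟨hll1, hll2⟩ := abs_le.mp hll'
  set c : ℝ := max (min l l' - δ) 0 with hc
  have hc0 : 0 ≤ c := le_max_right _ _
  have hcl : c ≤ l := max_le (by
    calc min l l' - δ ≤ min l l' := by linarith
      _ ≤ l := min_le_left _ _) hl.le
  have hcl' : c ≤ l' := max_le (by
    calc min l l' - δ ≤ min l l' := by linarith
      _ ≤ l' := min_le_right _ _) hl'.le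
  set mx : ℝ := min (x + l / 2) (x' + l' / 2) - max (x - l / 2) (x' - l' / 2) with hmx
  set my : ℝ := min (y + l / 2) (y' + l' / 2) - max (y - l / 2) (y' - l' / 2) with hmy
  have hvInt : volume (sqr l (x, y) ∩ sqr l' (x', y'))
      = ENNReal.ofReal mx * ENNReal.ofReal my := by
    rw [sqr, sqr, Set.prod_inter_prod, Measure.volume_eq_prod, Measure.prod_prod,
      Set.Icc_inter_Icc, Set.Icc_inter_Icc, Real.volume_Icc, Real.volume_Icc]
  have hmxc : min l l' - δ ≤ mx := by
    rw [hmx]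
    rcases min_cases (x + l / 2) (x' + l' / 2) with ⟨h1, _⟩ | ⟨h1, _⟩ <;>
      rcases max_cases (x - l / 2) (x' - l' / 2) with ⟨h2, _⟩ | ⟨h2, _⟩ <;>
      rcases min_cases l l' with ⟨h3, _⟩ | ⟨h3, _⟩ <;>
      rw [h1, h2, h3] <;> linarith
  have hmyc : min l l' - δ ≤ my := by
    rw [hmy]
    rcases min_cases (y + l / 2) (y' + l' / 2) with ⟨h1, _⟩ | ⟨h1, _⟩ <;>
      rcases max_cases (y - l / 2) (y' - l' / 2) with ⟨h2, _⟩ | ⟨h2, _⟩ <;>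
      rcases min_cases l l' with ⟨h3, _⟩ | ⟨h3, _⟩ <;>
      rw [h1, h2, h3] <;> linarith
  have hofc : ∀ m : ℝ, min l l' - δ ≤ m → ENNReal.ofReal c ≤ ENNReal.ofReal m := by
    intro m hm
    rcases max_cases (min l l' - δ) 0 with ⟨h, _⟩ | ⟨h, _⟩
    · rw [hc, h]; exact ENNReal.ofReal_le_ofReal hm
    · rw [hc, h]; simp
  have hIntlb : ENNReal.ofReal (c * c) ≤ volume (sqr l (x, y) ∩ sqr l' (x', y')) := by
    rw [hvInt, ENNReal.ofReal_mul hc0]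
    exact mul_le_mul' (hofc _ hmxc) (hofc _ hmyc)
  have hfin : volume (sqr l (x, y) ∩ sqr l' (x', y')) ≠ ⊤ := by
    rw [hvInt]; exact (ENNReal.mul_lt_top ENNReal.ofReal_lt_top ENNReal.ofReal_lt_top).ne
  have hmeas : ∀ (a : ℝ) (p : ℝ × ℝ), MeasurableSet (sqr a p) := fun a p =>
    (measurableSet_Icc.prod measurableSet_Icc)
  have key : ∀ (a b : ℝ) (p p' : ℝ × ℝ), 0 ≤ a →
      ENNReal.ofReal (c * c) ≤ volume (sqr a p ∩ sqr b p') →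
      volume (sqr a p ∩ sqr b p') ≠ ⊤ →
      volume (sqr a p \ sqr b p') ≤ ENNReal.ofReal (a * a) - ENNReal.ofReal (c * c) := by
    intro a b p p' ha hlb hfin'
    have he : sqr a p \ sqr b p' = sqr a p \ (sqr a p ∩ sqr b p') := by
      rw [Set.diff_self_inter]
    rw [he, measure_diff Set.inter_subset_left
      ((hmeas a p).inter (hmeas b p')).nullMeasurableSet hfin', vol_sqr a ha p]
    exact tsub_le_tsub le_rfl hlb
  have hcomm : sqr l' (x', y') ∩ sqr l (x, y) = sqr l (x, y) ∩ sqr l' (x', y') :=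
    Set.inter_comm _ _
  have h1 : volume (sqr l (x, y) \ sqr l' (x', y'))
      ≤ ENNReal.ofReal (l * l - c * c) := by
    rw [ENNReal.ofReal_sub _ (mul_nonneg hc0 hc0)]
    exact key l l' (x, y) (x', y') hl.le hIntlb hfin
  have h2 : volume (sqr l' (x', y') \ sqr l (x, y))
      ≤ ENNReal.ofReal (l' * l' - c * c) := by
    rw [ENNReal.ofReal_sub _ (mul_nonneg hc0 hc0)]
    refine key l' l (x', y') (x, y) hl'.le ?_ ?_
    · rw [hcomm]; exact hIntlb
    · rw [hcomm]; exact hfin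
  calc volume (sqr l (x, y) \ sqr l' (x', y')) + volume (sqr l' (x', y') \ sqr l (x, y))
      ≤ ENNReal.ofReal (l * l - c * c) + ENNReal.ofReal (l' * l' - c * c) :=
        add_le_add h1 h2
    _ = ENNReal.ofReal (l * l - c * c + (l' * l' - c * c)) := by
        rw [ENNReal.ofReal_add (by nlinarith) (by nlinarith)]
    _ ≤ ENNReal.ofReal (2 * M * (M + 2) * δ) := by
        apply ENNReal.ofReal_le_ofReal
        exact arith_bound l l' δ M hl hl' hlM hl'M hM hδ0 hll1 hll2

lemma vol_symmdiff (p p' : ℝ × ℝ) (l l' δ M : ℝ) (hl : 0 < l) (hl' : 0 < l')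
    (hlM : l ≤ M) (hl'M : l' ≤ M) (hM : 0 < M)
    (hδx : |p.1 - p'.1| ≤ δ) (hδy : |p.2 - p'.2| ≤ δ) (hll' : |l - l'| ≤ M * δ) :
    volume (sqr l p \ sqr l' p') + volume (sqr l' p' \ sqr l p)
      ≤ ENNReal.ofReal (2 * M * (M + 2) * δ) := by
  obtain ⟨x, y⟩ := p
  obtain ⟨x', y'⟩ := p'
  exact vol_symmdiff_xy x y l x' y' l' δ M hl hl' hlM hl'M hM hδx hδy hll'

lemma measurableSet_Omega : MeasurableSet Omega :=
  (measurableSet_lt measurable_const measurable_fst).inter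
    (measurableSet_lt measurable_const measurable_snd)

lemma measurableSet_sqE (lam : ℝ × ℝ → ℝ) (q : ℝ × ℝ) : MeasurableSet (sqE lam q) :=
  measurableSet_Icc.prod measurableSet_Icc

lemma volume_sqE_ne_top (lam : ℝ × ℝ → ℝ) (q : ℝ × ℝ) : volume (sqE lam q) ≠ ⊤ := by
  have : IsCompact (sqE lam q) := (isCompact_Icc.prod isCompact_Icc)
  exact this.measure_lt_top.ne

/-- Per-pair L² (lintegral) bound. -/
lemma lint_pair (lam : ℝ × ℝ → ℝ) (M : ℝ) (hM : 0 < M) (q q' : ℝ × ℝ)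
    (hlq : 0 < lam q) (hlq' : 0 < lam q') (hlqM : lam q ≤ M) (hlq'M : lam q' ≤ M)
    (hlip : |lam q - lam q'| ≤ M * ‖q - q'‖) :
    ∫⁻ z in Omega,
        (‖Set.indicator (sqE lam q) (1 : (ℝ × ℝ) → ℝ) z
          - Set.indicator (sqE lam q') (1 : (ℝ × ℝ) → ℝ) z‖₊ : ℝ≥0∞) ^ (2 : ℝ) ∂volume
      ≤ ENNReal.ofReal (2 * M * (M + 2) * ‖q - q'‖) := by
  set A := sqE lam q
  set B := sqE lam q'
  have hpt : ∀ z, (‖Set.indicator A (1 : (ℝ × ℝ) → ℝ) z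
      - Set.indicator B (1 : (ℝ × ℝ) → ℝ) z‖₊ : ℝ≥0∞) ^ (2 : ℝ)
      ≤ Set.indicator ((A \ B) ∪ (B \ A)) (fun _ => (1 : ℝ≥0∞)) z := by
    intro z
    by_cases hA : z ∈ A <;> by_cases hB : z ∈ B
    · simp only [Set.indicator_of_mem hA, Set.indicator_of_mem hB, Pi.one_apply, sub_self,
        nnnorm_zero, ENNReal.coe_zero]
      rw [ENNReal.zero_rpow_of_pos (by norm_num)]
      exact zero_le
    · have hz : z ∈ (A \ B) ∪ (B \ A) := Or.inl ⟨hA, hB⟩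
      simp only [Set.indicator_of_mem hA, Set.indicator_of_notMem hB,
        Set.indicator_of_mem hz, Pi.one_apply, sub_zero, nnnorm_one, ENNReal.coe_one,
        ENNReal.one_rpow, le_refl]
    · have hz : z ∈ (A \ B) ∪ (B \ A) := Or.inr ⟨hB, hA⟩
      simp only [Set.indicator_of_notMem hA, Set.indicator_of_mem hB,
        Set.indicator_of_mem hz, Pi.one_apply, zero_sub, nnnorm_neg, nnnorm_one,
        ENNReal.coe_one, ENNReal.one_rpow, le_refl]
    · simp only [Set.indicator_of_notMem hA, Set.indicator_of_notMem hB, sub_self,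
        nnnorm_zero, ENNReal.coe_zero]
      rw [ENNReal.zero_rpow_of_pos (by norm_num)]
      exact zero_le
  have hmeasu : MeasurableSet ((A \ B) ∪ (B \ A)) :=
    ((measurableSet_sqE lam q).diff (measurableSet_sqE lam q')).union
      ((measurableSet_sqE lam q').diff (measurableSet_sqE lam q))
  calc ∫⁻ z in Omega, (‖Set.indicator A (1 : (ℝ × ℝ) → ℝ) z
        - Set.indicator B (1 : (ℝ × ℝ) → ℝ) z‖₊ : ℝ≥0∞) ^ (2 : ℝ) ∂volume
      ≤ ∫⁻ z in Omega, Set.indicator ((A \ B) ∪ (B \ A)) (fun _ => (1 : ℝ≥0∞)) z ∂volume :=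
        lintegral_mono fun z => hpt z
    _ ≤ ∫⁻ z, Set.indicator ((A \ B) ∪ (B \ A)) (fun _ => (1 : ℝ≥0∞)) z ∂volume :=
        lintegral_mono' Measure.restrict_le_self le_rfl
    _ = volume ((A \ B) ∪ (B \ A)) := by
        rw [lintegral_indicator hmeasu]
        simp
    _ ≤ volume (A \ B) + volume (B \ A) := measure_union_le _ _
    _ ≤ ENNReal.ofReal (2 * M * (M + 2) * ‖q - q'‖) := by
        refine vol_symmdiff q q' (lam q) (lam q') (‖q - q'‖) M hlq hlq' hlqM hlq'M hM ?_ ?_ hlip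
        · rw [← Real.norm_eq_abs, ← Prod.fst_sub]
          exact norm_fst_le _
        · rw [← Real.norm_eq_abs, ← Prod.snd_sub]
          exact norm_snd_le _

/-- stability of `ρ` with respect to the `1/2`-Wasserstein distance. -/
theorem stmt6 (lam w : ℝ × ℝ → ℝ) (M : ℝ) (hM : 0 < M)
    (hlam0 : ∀ q ∈ Omega, 0 < lam q) (hw0 : ∀ q ∈ Omega, 0 < w q)
    (hE : ∀ q ∈ Omega, sqE lam q ⊆ Omega)
    (hlip : ∀ q ∈ Omega, ∀ q' ∈ Omega, |lam q - lam q'| ≤ M * ‖q - q'‖)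
    (hlamb : ∀ q ∈ Omega, lam q ≤ M) (hwb : ∀ q ∈ Omega, w q ≤ M)
    (N : ℕ) (hN : 1 ≤ N)
    (D D' : Fin N → ℝ × ℝ) (hD : ∀ n, D n ∈ Omega) (hD' : ∀ n, D' n ∈ Omega) :
    l2norm w (fun z => rho lam D z - rho lam D' z) ≤
      Real.sqrt (max (2 * M ^ 2 * (M + 2)) (4 * M)) * Whalf D D' := by

  classical
  obtain ⟨σ, hσ⟩ := exists_eq_ciInf_of_finite
    (f := fun σ : Equiv.Perm (Fin N) => ∑ n, ‖D n - D' (σ n)‖ ^ ((1 : ℝ) / 2))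
  rw [Whalf, ← hσ]
  set μ := volume.restrict Omega with hμ
  set d : Fin N → (ℝ × ℝ) → ℝ := fun n z =>
    Set.indicator (sqE lam (D n)) 1 z - Set.indicator (sqE lam (D' (σ n))) 1 z with hd
  set g : (ℝ × ℝ) → ℝ := fun z => ∑ n, d n z with hgdef
  have hg : (fun z => rho lam D z - rho lam D' z) = g := by
    funext z
    simp only [hgdef, rho, hd]
    rw [← Equiv.sum_comp σ (fun n => Set.indicator (sqE lam (D' n)) 1 z),
      Finset.sum_sub_distrib]
  rw [hg]
  have hdm : ∀ n, Measurable (d n) := fun n =>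
    (measurable_const.indicator (measurableSet_sqE lam (D n))).sub
      (measurable_const.indicator (measurableSet_sqE lam (D' (σ n))))
  have hgm : Measurable g := Finset.measurable_sum _ fun n _ => hdm n
  have hμfin : ∀ q : ℝ × ℝ, μ (sqE lam q) ≠ ⊤ := fun q =>
    (lt_of_le_of_lt (Measure.restrict_apply_le _ _)
      (lt_of_le_of_ne le_top (volume_sqE_ne_top lam q))).ne
  have hmem : ∀ n, MemLp (d n) 2 μ := by
    intro n
    exact MemLp.sub
      (memLp_indicator_const 2 (measurableSet_sqE lam (D n)) (1 : ℝ)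
        (Or.inr (hμfin (D n))))
      (memLp_indicator_const 2 (measurableSet_sqE lam (D' (σ n))) (1 : ℝ)
        (Or.inr (hμfin (D' (σ n)))))
  have hgmem : MemLp g 2 μ := memLp_finset_sum Finset.univ fun n _ => hmem n
  -- Step A : replace w by constant M
  have hstepA : ∫ z in Omega, g z ^ 2 * w z ≤ ∫ z in Omega, M * g z ^ 2 := by
    have hInt2 : IntegrableOn (fun z => M * g z ^ 2) Omega volume :=
      hgmem.integrable_sq.const_mul M
    by_cases hInt : IntegrableOn (fun z => g z ^ 2 * w z) Omega volume
    · refine setIntegral_mono_on hInt hInt2 measurableSet_Omega fun z hz => ?_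
      have h1 : w z ≤ M := hwb z hz
      have h2 : (0 : ℝ) ≤ g z ^ 2 := sq_nonneg _
      calc g z ^ 2 * w z ≤ g z ^ 2 * M := mul_le_mul_of_nonneg_left h1 h2
        _ = M * g z ^ 2 := mul_comm _ _
    · rw [integral_undef hInt]
      exact setIntegral_nonneg measurableSet_Omega fun z hz =>
        mul_nonneg hM.le (sq_nonneg _)
  -- relate the integral of g² to eLpNorm
  have hlim : ∫ z in Omega, g z ^ 2
      = (∫⁻ z, (‖g z‖₊ : ℝ≥0∞) ^ (2 : ℝ) ∂μ).toReal := by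
    rw [← hμ, integral_eq_lintegral_of_nonneg_ae (ae_of_all _ fun z => sq_nonneg (g z))
      ((hgm.pow_const 2).aestronglyMeasurable)]
    congr 1
    apply lintegral_congr
    intro z
    rw [show ENNReal.ofReal (g z ^ 2) = ENNReal.ofReal (‖g z‖ ^ 2) by
        rw [Real.norm_eq_abs, sq_abs],
      ENNReal.ofReal_pow (norm_nonneg _), ofReal_norm, enorm_eq_nnnorm,
      ← ENNReal.rpow_natCast]
    norm_num
  have help : eLpNorm g 2 μ
      = (∫⁻ z, (‖g z‖₊ : ℝ≥0∞) ^ (2 : ℝ) ∂μ) ^ ((1 : ℝ) / 2) := by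
    rw [eLpNorm_eq_lintegral_rpow_enorm_toReal two_ne_zero ENNReal.ofNat_ne_top]
    norm_num
    rfl
  have hsqrtI : Real.sqrt (∫ z in Omega, g z ^ 2) = (eLpNorm g 2 μ).toReal := by
    rw [hlim, Real.sqrt_eq_rpow, ENNReal.toReal_rpow, help]
  -- sum bound
  have hgsum : g = ∑ n, d n := by
    funext z
    rw [hgdef, Finset.sum_apply]
  have hsum : eLpNorm g 2 μ ≤ ∑ n, eLpNorm (d n) 2 μ := by
    rw [hgsum]
    exact eLpNorm_sum_le (fun n _ => (hdm n).aestronglyMeasurable) one_le_two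
  set K : ℝ := Real.sqrt (2 * M * (M + 2)) with hK
  have hterm : ∀ n, eLpNorm (d n) 2 μ
      ≤ ENNReal.ofReal (K * ‖D n - D' (σ n)‖ ^ ((1 : ℝ) / 2)) := by
    intro n
    rw [eLpNorm_eq_lintegral_rpow_enorm_toReal two_ne_zero ENNReal.ofNat_ne_top]
    norm_num only [ENNReal.toReal_ofNat]
    have hb := lint_pair lam M hM (D n) (D' (σ n))
      (hlam0 _ (hD n)) (hlam0 _ (hD' (σ n))) (hlamb _ (hD n)) (hlamb _ (hD' (σ n)))
      (hlip _ (hD n) _ (hD' (σ n)))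
    have hδ0 : (0 : ℝ) ≤ ‖D n - D' (σ n)‖ := norm_nonneg _
    calc (∫⁻ z, (‖d n z‖₊ : ℝ≥0∞) ^ (2 : ℝ) ∂μ) ^ ((1 : ℝ) / 2)
        ≤ (ENNReal.ofReal (2 * M * (M + 2) * ‖D n - D' (σ n)‖)) ^ ((1 : ℝ) / 2) :=
          ENNReal.rpow_le_rpow hb (by norm_num)
      _ = ENNReal.ofReal ((2 * M * (M + 2) * ‖D n - D' (σ n)‖) ^ ((1 : ℝ) / 2)) :=
          ENNReal.ofReal_rpow_of_nonneg (by positivity) (by norm_num)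
      _ = ENNReal.ofReal (K * ‖D n - D' (σ n)‖ ^ ((1 : ℝ) / 2)) := by
          congr 1
          rw [Real.mul_rpow (by positivity) hδ0, hK, Real.sqrt_eq_rpow]
  have hS0 : (0 : ℝ) ≤ ∑ n, K * ‖D n - D' (σ n)‖ ^ ((1 : ℝ) / 2) :=
    Finset.sum_nonneg fun n _ => mul_nonneg (Real.sqrt_nonneg _) (by positivity)
  have htot : (eLpNorm g 2 μ).toReal ≤ ∑ n, K * ‖D n - D' (σ n)‖ ^ ((1 : ℝ) / 2) := by
    have h1 : eLpNorm g 2 μ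
        ≤ ENNReal.ofReal (∑ n, K * ‖D n - D' (σ n)‖ ^ ((1 : ℝ) / 2)) := by
      refine le_trans hsum ?_
      rw [ENNReal.ofReal_sum_of_nonneg fun n _ =>
        mul_nonneg (Real.sqrt_nonneg _) (by positivity)]
      exact Finset.sum_le_sum fun n _ => hterm n
    calc (eLpNorm g 2 μ).toReal
        ≤ (ENNReal.ofReal (∑ n, K * ‖D n - D' (σ n)‖ ^ ((1 : ℝ) / 2))).toReal :=
          ENNReal.toReal_mono ENNReal.ofReal_ne_top h1
      _ = _ := ENNReal.toReal_ofReal hS0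
  -- final assembly
  have hfin : l2norm w g ≤ Real.sqrt M * ∑ n, K * ‖D n - D' (σ n)‖ ^ ((1 : ℝ) / 2) := by
    rw [l2norm]
    calc Real.sqrt (∫ z in Omega, g z ^ 2 * w z)
        ≤ Real.sqrt (∫ z in Omega, M * g z ^ 2) := Real.sqrt_le_sqrt hstepA
      _ = Real.sqrt (M * ∫ z in Omega, g z ^ 2) := by rw [integral_const_mul]
      _ = Real.sqrt M * Real.sqrt (∫ z in Omega, g z ^ 2) := Real.sqrt_mul hM.le _
      _ = Real.sqrt M * (eLpNorm g 2 μ).toReal := by rw [hsqrtI]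
      _ ≤ Real.sqrt M * ∑ n, K * ‖D n - D' (σ n)‖ ^ ((1 : ℝ) / 2) :=
          mul_le_mul_of_nonneg_left htot (Real.sqrt_nonneg _)
  refine le_trans hfin ?_
  rw [← Finset.mul_sum, ← mul_assoc]
  refine mul_le_mul_of_nonneg_right ?_
    (Finset.sum_nonneg fun n _ => by positivity)
  rw [hK, ← Real.sqrt_mul hM.le]
  refine Real.sqrt_le_sqrt ?_
  calc M * (2 * M * (M + 2)) = 2 * M ^ 2 * (M + 2) := by ring
    _ ≤ max (2 * M ^ 2 * (M + 2)) (4 * M) := le_max_left _ _
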